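/- The incidence coalgebra C = IC(X) of a locally finite preordered set X is cosemisimple (a direct sum of simple subcoalgebras) if and only if ≤ is symmetric, i.e., x ≤ y implies y ≤ x for all x, y ∈ X. -/

import Mathlib

open TensorProduct

/-- The underlying vector space of the incidence coalgebra `IC(X)`:
functions with finite support on the set of pairs `(x, y)` with `x ≤ y`. -/
abbrev IC (k X : Type*) [Field k] [Preorder X] : Type _ :=
  {p : X × X // p.1 ≤ p.2} →₀ k

/-- The basis element `e_{x,y}` of the incidence coalgebra. -/
noncomputable def e (k : Type*) {X : Type*} [Field k] [Preorder X] (x y : X) (h : x ≤ y) :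
    IC k X :=
  Finsupp.single ⟨(x, y), h⟩ 1

/-- The comultiplication `Δ(e_{x,y}) = Σ_{x ≤ z ≤ y} e_{x,z} ⊗ e_{z,y}`. -/
noncomputable def Δ (k : Type*) {X : Type*} [Field k] [Preorder X] [LocallyFiniteOrder X] :
    IC k X →ₗ[k] IC k X ⊗[k] IC k X :=
  Finsupp.lsum k fun p => LinearMap.toSpanSingleton k _
    (∑ z ∈ (Finset.Icc p.1.1 p.1.2).attach,
      e k p.1.1 z.1 (Finset.mem_Icc.mp z.2).1 ⊗ₜ[k] e k z.1 p.1.2 (Finset.mem_Icc.mp z.2).2)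

open Classical in
/-- The counit `ε(e_{x,y}) = δ_{x,y}`. -/
noncomputable def ε (k : Type*) {X : Type*} [Field k] [Preorder X] : IC k X →ₗ[k] k :=
  Finsupp.lsum k fun p => LinearMap.toSpanSingleton k k (if p.1.1 = p.1.2 then 1 else 0)

/-- The left action of `C* = Module.Dual k (IC k X)` on `C = IC k X` induced by the right
comodule structure: `c* → c = Σ c*(c₂) c₁`. -/
noncomputable def act (k : Type*) {X : Type*} [Field k] [Preorder X] [LocallyFiniteOrder X]
    (f : Module.Dual k (IC k X)) : IC k X →ₗ[k] IC k X :=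
  (TensorProduct.rid k (IC k X)).toLinearMap ∘ₗ TensorProduct.map LinearMap.id f ∘ₗ Δ k

/-- The right action of `C*` on `C`: `c ← c* = Σ c*(c₁) c₂`. -/
noncomputable def actR (k : Type*) {X : Type*} [Field k] [Preorder X] [LocallyFiniteOrder X]
    (f : Module.Dual k (IC k X)) : IC k X →ₗ[k] IC k X :=
  (TensorProduct.lid k (IC k X)).toLinearMap ∘ₗ TensorProduct.map f LinearMap.id ∘ₗ Δ k

/-- The dual basis functional `p_{x,y}`. -/
noncomputable def pfun (k : Type*) {X : Type*} [Field k] [Preorder X] (x y : X) (h : x ≤ y) :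
    Module.Dual k (IC k X) :=
  Finsupp.lapply ⟨(x, y), h⟩

/-- A subspace `D ⊆ IC(X)` is a subcoalgebra if `Δ(D) ⊆ D ⊗ D`. -/
def IsSubcoalgebra (k : Type*) {X : Type*} [Field k] [Preorder X] [LocallyFiniteOrder X]
    (D : Submodule k (IC k X)) : Prop :=
  ∀ c ∈ D, Δ k c ∈ LinearMap.range (TensorProduct.map D.subtype D.subtype)

/-- A subcoalgebra is simple if it is nonzero and has no nonzero proper subcoalgebras. -/
def IsSimpleSubcoalgebra (k : Type*) {X : Type*} [Field k] [Preorder X] [LocallyFiniteOrder X]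
    (D : Submodule k (IC k X)) : Prop :=
  IsSubcoalgebra k D ∧ D ≠ ⊥ ∧
    ∀ N : Submodule k (IC k X), N ≤ D → IsSubcoalgebra k N → N = ⊥ ∨ N = D

/-- The coradical of `IC(X)`: the sum of all its simple subcoalgebras. -/
noncomputable def coradical (k X : Type*) [Field k] [Preorder X] [LocallyFiniteOrder X] :
    Submodule k (IC k X) :=
  sSup {D : Submodule k (IC k X) | IsSimpleSubcoalgebra k D}

section Lemmas

set_option linter.unusedSectionVars false
variable {k X : Type*} [Field k] [Preorder X] [LocallyFiniteOrder X]

lemma e_ne_zero (x y : X) (h : x ≤ y) : e k x y h ≠ 0 := by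
  simp [e, Finsupp.single_eq_zero]

open Classical in
lemma pfun_e (a b : X) (hab : a ≤ b) (u v : X) (huv : u ≤ v) :
    pfun k a b hab (e k u v huv) = if (u, v) = (a, b) then 1 else 0 := by
  classical
  simp [pfun, e, Finsupp.lapply_apply, Finsupp.single_apply, Subtype.ext_iff]

lemma Δ_e (x y : X) (h : x ≤ y) :
    Δ k (e k x y h) = ∑ z ∈ (Finset.Icc x y).attach,
      e k x z.1 (Finset.mem_Icc.mp z.2).1 ⊗ₜ[k] e k z.1 y (Finset.mem_Icc.mp z.2).2 := by
  rw [e, show Δ k (Finsupp.single ⟨(x, y), h⟩ 1) = _ from Finsupp.lsum_single _ _ _ _]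
  simp [LinearMap.toSpanSingleton_apply]

lemma act_e (f : Module.Dual k (IC k X)) (x y : X) (h : x ≤ y) :
    act k f (e k x y h) = ∑ z ∈ (Finset.Icc x y).attach,
      f (e k z.1 y (Finset.mem_Icc.mp z.2).2) • e k x z.1 (Finset.mem_Icc.mp z.2).1 := by
  simp only [act, LinearMap.coe_comp, Function.comp_apply, LinearEquiv.coe_coe, Δ_e, map_sum,
    TensorProduct.map_tmul, LinearMap.id_apply]
  exact (Finset.sum_congr rfl fun z _ => TensorProduct.rid_tmul _ _)

lemma actR_e (f : Module.Dual k (IC k X)) (x y : X) (h : x ≤ y) :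
    actR k f (e k x y h) = ∑ z ∈ (Finset.Icc x y).attach,
      f (e k x z.1 (Finset.mem_Icc.mp z.2).1) • e k z.1 y (Finset.mem_Icc.mp z.2).2 := by
  simp only [actR, LinearMap.coe_comp, Function.comp_apply, LinearEquiv.coe_coe, Δ_e, map_sum,
    TensorProduct.map_tmul, LinearMap.id_apply]
  exact (Finset.sum_congr rfl fun z _ => TensorProduct.lid_tmul _ _)

lemma act_pfun_e_eq (a u v : X) (hua : u ≤ a) (hav : a ≤ v) (huv : u ≤ v) :
    act k (pfun k a v hav) (e k u v huv) = e k u a hua := by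
  classical
  rw [act_e]
  rw [Finset.sum_eq_single_of_mem (⟨a, Finset.mem_Icc.mpr ⟨hua, hav⟩⟩ : {z // z ∈ Finset.Icc u v})
    (Finset.mem_attach _ _)]
  · simp [pfun_e]
  · intro b _ hb
    rw [pfun_e]
    have : (b.1, v) ≠ (a, v) := by
      intro hc
      exact hb (Subtype.ext (by exact congrArg Prod.fst hc))
    simp [this]

lemma act_pfun_e_ne (a b u v : X) (hab : a ≤ b) (huv : u ≤ v) (hne : b ≠ v) :
    act k (pfun k a b hab) (e k u v huv) = 0 := by
  classical
  rw [act_e]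
  apply Finset.sum_eq_zero
  intro z _
  rw [pfun_e]
  have : (z.1, v) ≠ (a, b) := fun hc => hne (congrArg Prod.snd hc).symm
  simp [this]

lemma actR_pfun_e_eq (b u v : X) (hub : u ≤ b) (hbv : b ≤ v) (huv : u ≤ v) :
    actR k (pfun k u b hub) (e k u v huv) = e k b v hbv := by
  classical
  rw [actR_e]
  rw [Finset.sum_eq_single_of_mem (⟨b, Finset.mem_Icc.mpr ⟨hub, hbv⟩⟩ : {z // z ∈ Finset.Icc u v})
    (Finset.mem_attach _ _)]
  · simp [pfun_e]
  · intro c _ hc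
    rw [pfun_e]
    have : (u, c.1) ≠ (u, b) := by
      intro h
      exact hc (Subtype.ext (congrArg Prod.snd h))
    simp [this]

lemma actR_pfun_e_ne (a b u v : X) (hab : a ≤ b) (huv : u ≤ v) (hne : a ≠ u) :
    actR k (pfun k a b hab) (e k u v huv) = 0 := by
  classical
  rw [actR_e]
  apply Finset.sum_eq_zero
  intro z _
  rw [pfun_e]
  have : (u, z.1) ≠ (a, b) := fun hc => hne (congrArg Prod.fst hc).symm
  simp [this]

lemma act_mem {D : Submodule k (IC k X)} (hD : IsSubcoalgebra k D)
    (f : Module.Dual k (IC k X)) {c : IC k X} (hc : c ∈ D) : act k f c ∈ D := by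
  obtain ⟨t, ht⟩ := hD c hc
  have key : ∀ s : D ⊗[k] D, (TensorProduct.rid k (IC k X)).toLinearMap
      (TensorProduct.map LinearMap.id f (TensorProduct.map D.subtype D.subtype s)) ∈ D := by
    intro s
    induction s using TensorProduct.induction_on with
    | zero => simp only [map_zero]; exact D.zero_mem
    | tmul a b =>
        simp only [TensorProduct.map_tmul, LinearMap.id_apply, LinearEquiv.coe_coe,
          TensorProduct.rid_tmul]
        exact D.smul_mem _ a.2
    | add a b ha hb =>
        simp only [map_add]
        exact D.add_mem ha hb
  have heq : act k f c = (TensorProduct.rid k (IC k X)).toLinearMap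
      (TensorProduct.map LinearMap.id f (TensorProduct.map D.subtype D.subtype t)) := by
    rw [act]
    simp only [LinearMap.coe_comp, Function.comp_apply, ht]
  rw [heq]
  exact key t

lemma actR_mem {D : Submodule k (IC k X)} (hD : IsSubcoalgebra k D)
    (f : Module.Dual k (IC k X)) {c : IC k X} (hc : c ∈ D) : actR k f c ∈ D := by
  obtain ⟨t, ht⟩ := hD c hc
  have key : ∀ s : D ⊗[k] D, (TensorProduct.lid k (IC k X)).toLinearMap
      (TensorProduct.map f LinearMap.id (TensorProduct.map D.subtype D.subtype s)) ∈ D := by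
    intro s
    induction s using TensorProduct.induction_on with
    | zero => simp only [map_zero]; exact D.zero_mem
    | tmul a b =>
        simp only [TensorProduct.map_tmul, LinearMap.id_apply, LinearEquiv.coe_coe,
          TensorProduct.lid_tmul]
        exact D.smul_mem _ b.2
    | add a b ha hb =>
        simp only [map_add]
        exact D.add_mem ha hb
  have heq : actR k f c = (TensorProduct.lid k (IC k X)).toLinearMap
      (TensorProduct.map f LinearMap.id (TensorProduct.map D.subtype D.subtype t)) := by
    rw [actR]
    simp only [LinearMap.coe_comp, Function.comp_apply, ht]
  rw [heq]
  exact key t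

open Classical in
lemma extract (x y : X) (h : x ≤ y) (c : IC k X) :
    actR k (pfun k x x le_rfl) (act k (pfun k y y le_rfl) c)
      = c ⟨(x, y), h⟩ • e k x y h := by
  have key : (actR k (pfun k x x le_rfl)) ∘ₗ (act k (pfun k y y le_rfl))
      = LinearMap.toSpanSingleton k (IC k X) (e k x y h) ∘ₗ
        (Finsupp.lapply ⟨(x, y), h⟩ : IC k X →ₗ[k] k) := by
    apply Finsupp.lhom_ext
    rintro ⟨⟨u, v⟩, huv⟩ b
    have hs : (Finsupp.single (⟨(u, v), huv⟩ : {p : X × X // p.1 ≤ p.2}) b : IC k X)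
        = b • e k u v huv := by
      rw [e, Finsupp.smul_single', mul_one]
    rw [hs]
    simp only [LinearMap.comp_apply, map_smul, LinearMap.toSpanSingleton_apply,
      Finsupp.lapply_apply]
    by_cases hv : v = y
    · subst hv
      rw [act_pfun_e_eq v u v huv le_rfl huv]
      by_cases hu : u = x
      · subst hu
        rw [actR_pfun_e_eq u u v le_rfl huv huv]
        rw [e, Finsupp.single_apply]
        simp [e]
      · rw [actR_pfun_e_ne x x u v le_rfl huv (fun hc => hu hc.symm)]
        rw [e, Finsupp.single_apply]
        simp [hu, Subtype.ext_iff, Prod.ext_iff]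
    · rw [act_pfun_e_ne y y u v le_rfl huv (fun hc => hv hc.symm)]
      rw [e, Finsupp.single_apply]
      simp [hv, Subtype.ext_iff, Prod.ext_iff]
  have := DFunLike.congr_fun key c
  simpa [e] using this

lemma e_mem_of_coeff {D : Submodule k (IC k X)} (hD : IsSubcoalgebra k D)
    {c : IC k X} (hc : c ∈ D) (x y : X) (h : x ≤ y) (hne : c ⟨(x, y), h⟩ ≠ 0) :
    e k x y h ∈ D := by
  have h1 : actR k (pfun k x x le_rfl) (act k (pfun k y y le_rfl) c) ∈ D :=
    actR_mem hD _ (act_mem hD _ hc)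
  rw [extract x y h c] at h1
  have h2 := D.smul_mem (c ⟨(x, y), h⟩)⁻¹ h1
  rwa [smul_smul, inv_mul_cancel₀ hne, one_smul] at h2

lemma gen_mem {N : Submodule k (IC k X)} (hN : IsSubcoalgebra k N)
    {u v : X} {huv : u ≤ v} (he : e k u v huv ∈ N)
    (a b : X) (hab : a ≤ b) (h1 : u ≤ a) (h2 : b ≤ v) : e k a b hab ∈ N := by
  have h1' : u ≤ b := h1.trans hab
  have hub : e k u b h1' ∈ N := by
    have := act_mem hN (pfun k b v h2) he
    rwa [act_pfun_e_eq b u v h1' h2 huv] at this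
  have := actR_mem hN (pfun k u a h1) hub
  rwa [actR_pfun_e_eq a u b h1 hab h1'] at this

lemma e_mem_supported_iff (S : Set {p : X × X // p.1 ≤ p.2}) (x y : X) (h : x ≤ y) :
    e k x y h ∈ Finsupp.supported k k S ↔ (⟨(x, y), h⟩ : {p : X × X // p.1 ≤ p.2}) ∈ S := by
  rw [e, Finsupp.mem_supported, Finsupp.support_single_ne_zero _ one_ne_zero]
  simp

lemma supported_subcoalgebra (S : Set {p : X × X // p.1 ≤ p.2})
    (hS : ∀ p ∈ S, ∀ z, ∀ (hz1 : p.1.1 ≤ z) (hz2 : z ≤ p.1.2),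
      (⟨(p.1.1, z), hz1⟩ : {q : X × X // q.1 ≤ q.2}) ∈ S ∧
        (⟨(z, p.1.2), hz2⟩ : {q : X × X // q.1 ≤ q.2}) ∈ S) :
    IsSubcoalgebra k (Finsupp.supported k k S) := by
  intro c hc
  rw [← Finsupp.sum_single c, map_finsuppSum, Finsupp.sum]
  apply Submodule.sum_mem
  intro p hp
  have hpS : p ∈ S := (Finsupp.mem_supported k c).mp hc hp
  have hs : (Finsupp.single p (c p) : IC k X) = c p • e k p.1.1 p.1.2 p.2 := by
    rw [e, Finsupp.smul_single', mul_one]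
  rw [hs, map_smul]
  apply Submodule.smul_mem
  rw [Δ_e]
  apply Submodule.sum_mem
  rintro ⟨z, hz⟩ -
  have hz1 := (Finset.mem_Icc.mp hz).1
  have hz2 := (Finset.mem_Icc.mp hz).2
  refine ⟨(⟨e k p.1.1 z hz1, ?_⟩ : Finsupp.supported k k S) ⊗ₜ[k]
    (⟨e k z p.1.2 hz2, ?_⟩ : Finsupp.supported k k S), ?_⟩
  · exact Finsupp.single_mem_supported k 1 (hS p hpS z hz1 hz2).1
  · exact Finsupp.single_mem_supported k 1 (hS p hpS z hz1 hz2).2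
  · simp [TensorProduct.map_tmul]

lemma class_subcoalgebra (x : X) :
    IsSubcoalgebra k (Finsupp.supported k k
      {p : {p : X × X // p.1 ≤ p.2} | x ≤ p.1.1 ∧ p.1.2 ≤ x}) := by
  apply supported_subcoalgebra
  rintro ⟨⟨u, v⟩, huv⟩ ⟨h1, h2⟩ z hz1 hz2
  exact ⟨⟨h1, hz2.trans h2⟩, ⟨h1.trans hz1, h2⟩⟩

lemma class_le {x : X} {N : Submodule k (IC k X)} (hN : IsSubcoalgebra k N)
    {u v : X} {huv : u ≤ v} (he : e k u v huv ∈ N) (hux : u ≤ x) (hxv : x ≤ v) :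
    Finsupp.supported k k {p : {p : X × X // p.1 ≤ p.2} | x ≤ p.1.1 ∧ p.1.2 ≤ x} ≤ N := by
  rw [Finsupp.supported_eq_span_single, Submodule.span_le]
  rintro _ ⟨⟨⟨a, b⟩, hab⟩, ⟨ha, hb⟩, rfl⟩
  exact gen_mem hN he a b hab (hux.trans ha) (hb.trans hxv)

end Lemmas

/-- The incidence coalgebra `C = IC(X)` of a locally finite preordered set
is cosemisimple (the sum of its simple subcoalgebras is all of `C`) if and only if `≤` is
symmetric, i.e. `x ≤ y → y ≤ x` for all `x, y`. -/


theorem statement18 (k X : Type*) [Field k] [Preorder X] [LocallyFiniteOrder X] :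
    coradical k X = ⊤ ↔ ∀ x y : X, x ≤ y → y ≤ x := by
  classical
  constructor
  · intro hcor x y hxy
    have hV : coradical k X ≤ Finsupp.supported k k
        {p : {p : X × X // p.1 ≤ p.2} | p.1.2 ≤ p.1.1} := by
      apply sSup_le
      rintro D ⟨hDsub, hDne, hDmin⟩
      by_contra hle
      rw [SetLike.not_le_iff_exists] at hle
      obtain ⟨c, hcD, hcV⟩ := hle
      rw [Finsupp.mem_supported, Set.not_subset] at hcV
      obtain ⟨⟨⟨a, b⟩, hab⟩, hpsupp, hpS⟩ := hcV
      have hcoeff : c ⟨(a, b), hab⟩ ≠ 0 := Finsupp.mem_support_iff.mp hpsupp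
      have heab : e k a b hab ∈ D := e_mem_of_coeff hDsub hcD a b hab hcoeff
      have heaa : e k a a le_rfl ∈ D := gen_mem hDsub heab a a le_rfl le_rfl hab
      rcases hDmin (Finsupp.supported k k
          {p : {p : X × X // p.1 ≤ p.2} | a ≤ p.1.1 ∧ p.1.2 ≤ a})
          (class_le hDsub heaa le_rfl le_rfl) (class_subcoalgebra a) with hbot | htop
      · have hmm : e k a a le_rfl ∈ Finsupp.supported k k
            {p : {p : X × X // p.1 ≤ p.2} | a ≤ p.1.1 ∧ p.1.2 ≤ a} :=
          (e_mem_supported_iff _ a a le_rfl).mpr ⟨le_rfl, le_rfl⟩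
        rw [hbot] at hmm
        exact e_ne_zero a a le_rfl (by simpa using hmm)
      · have hmm : e k a b hab ∈ Finsupp.supported k k
            {p : {p : X × X // p.1 ≤ p.2} | a ≤ p.1.1 ∧ p.1.2 ≤ a} := htop ▸ heab
        exact hpS ((e_mem_supported_iff _ a b hab).mp hmm).2
    have hmem : e k x y hxy ∈ Finsupp.supported k k
        {p : {p : X × X // p.1 ≤ p.2} | p.1.2 ≤ p.1.1} := by
      apply hV
      rw [hcor]
      trivial
    exact (e_mem_supported_iff _ x y hxy).mp hmem
  · intro hsymm
    rw [eq_top_iff]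
    rintro c -
    induction c using Finsupp.induction_linear with
    | zero => exact Submodule.zero_mem _
    | add f g hf hg => exact Submodule.add_mem _ hf hg
    | single q b =>
      obtain ⟨⟨u, v⟩, huv⟩ := q
      have hsimple : IsSimpleSubcoalgebra k (Finsupp.supported k k
          {p : {p : X × X // p.1 ≤ p.2} | u ≤ p.1.1 ∧ p.1.2 ≤ u}) := by
        refine ⟨class_subcoalgebra u, ?_, ?_⟩
        · intro hbot
          have hmm : e k u u le_rfl ∈ Finsupp.supported k k
              {p : {p : X × X // p.1 ≤ p.2} | u ≤ p.1.1 ∧ p.1.2 ≤ u} :=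
            (e_mem_supported_iff _ u u le_rfl).mpr ⟨le_rfl, le_rfl⟩
          rw [hbot] at hmm
          exact e_ne_zero u u le_rfl (by simpa using hmm)
        · intro N hle hNsub
          by_cases hNbot : N = ⊥
          · exact Or.inl hNbot
          refine Or.inr (le_antisymm hle ?_)
          obtain ⟨c0, hc0N, hc0ne⟩ := (Submodule.ne_bot_iff N).mp hNbot
          obtain ⟨q0, hq0ne⟩ : ∃ q0, c0 q0 ≠ 0 := by
            by_contra hcon
            push_neg at hcon
            exact hc0ne (Finsupp.ext hcon)
          obtain ⟨⟨a0, b0⟩, hab0⟩ := q0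
          have hq0S : u ≤ a0 ∧ b0 ≤ u :=
            (Finsupp.mem_supported k c0).mp (hle hc0N) (Finsupp.mem_support_iff.mpr hq0ne)
          have he0 : e k a0 b0 hab0 ∈ N := e_mem_of_coeff hNsub hc0N a0 b0 hab0 hq0ne
          exact class_le hNsub he0 (hsymm u a0 hq0S.1) (hsymm b0 u hq0S.2)
      have hemem : e k u v huv ∈ coradical k X := by
        have hle : Finsupp.supported k k
            {p : {p : X × X // p.1 ≤ p.2} | u ≤ p.1.1 ∧ p.1.2 ≤ u} ≤ coradical k X :=
          le_sSup hsimple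
        exact hle ((e_mem_supported_iff _ u v huv).mpr ⟨le_rfl, hsymm u v huv⟩)
      have hs : (Finsupp.single (⟨(u, v), huv⟩ : {p : X × X // p.1 ≤ p.2}) b : IC k X)
          = b • e k u v huv := by
        rw [e, Finsupp.smul_single', mul_one]
      rw [hs]
      exact Submodule.smul_mem _ _ hemem
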